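/- Let 0 → A → E →^β B → 0 be an abelian extension of an associative conformal algebra B by a B-bimodule A, with associated 2-cocycle χ and Wells map W(∂_A, ∂_B) = [Θ(∂_A,∂_B)(χ)]. Then there is an exact sequence of vector spaces 0 → Z¹(B,A) → Der_A(E) →^{κ̄} g(A,B) →^W H²(B,A), where κ̄(∂_E) = (∂_E|_A, β∘∂_E∘γ); in particular a pair (∂_A, ∂_B) ∈ Der(A)×Der(B) is extensible to a derivation of E if and only if (∂_A,∂_B) ∈ g(A,B) and W(∂_A,∂_B) = 0. -/

import Mathlib

structure AssocConformalAlg (k : Type*) [Field k] (A : Type*) [AddCommGroup A] [Module k A] where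
  D : A →ₗ[k] A
  mul : k → A →ₗ[k] A →ₗ[k] A
  conf_left : ∀ (l : k) (a b : A), mul l (D a) b = -(l • mul l a b)
  conf_right : ∀ (l : k) (a b : A), mul l a (D b) = D (mul l a b) + l • mul l a b
  assoc : ∀ (l m : k) (a b c : A), mul (l + m) (mul l a b) c = mul l a (mul m b c)

structure ConfBimodule {k : Type*} [Field k] {A : Type*} [AddCommGroup A] [Module k A]
    (S : AssocConformalAlg k A) (M : Type*) [AddCommGroup M] [Module k M] where
  DM : M →ₗ[k] M
  lact : k → A →ₗ[k] M →ₗ[k] M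
  ract : k → M →ₗ[k] A →ₗ[k] M
  lact_D : ∀ (l : k) (a : A) (v : M), lact l (S.D a) v = -(l • lact l a v)
  lact_DM : ∀ (l : k) (a : A) (v : M), lact l a (DM v) = DM (lact l a v) + l • lact l a v
  lact_mul : ∀ (l m : k) (a b : A) (v : M),
      lact (l + m) (S.mul l a b) v = lact l a (lact m b v)
  ract_DM : ∀ (l : k) (v : M) (a : A), ract l (DM v) a = -(l • ract l v a)
  ract_D : ∀ (l : k) (v : M) (a : A), ract l v (S.D a) = DM (ract l v a) + l • ract l v a
  ract_mul : ∀ (l m : k) (v : M) (a b : A),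
      ract (l + m) (ract l v a) b = ract l v (S.mul m a b)
  compat : ∀ (l m : k) (a : A) (v : M) (b : A),
      ract (l + m) (lact l a v) b = lact l a (ract m v b)

/-- A derivation of an associative conformal algebra. -/
def IsConfDer {k : Type*} [Field k] {E : Type*} [AddCommGroup E] [Module k E]
    (S : AssocConformalAlg k E) (d : E →ₗ[k] E) : Prop :=
  (∀ x, d (S.D x) = S.D (d x)) ∧
  ∀ (l : k) (x y : E), d (S.mul l x y) = S.mul l (d x) y + S.mul l x (d y)

/-- The exact Wells-type sequence for derivations of an abelian extension:
`0 → Z¹(B,A) → Der_A(E) →^{κ̄} g(A,B) →^{W} H²(B,A)`, and in particular a pair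
`(∂_A, ∂_B)` is extensible iff it lies in `g(A,B)` and its Wells class vanishes. -/
theorem stmt_19 (k : Type*) [Field k] [IsAlgClosed k] [CharZero k]
    (A B : Type*) [AddCommGroup A] [Module k A] [AddCommGroup B] [Module k B]
    (SB : AssocConformalAlg k B) (Mb : ConfBimodule SB A)
    (chi : k → B →ₗ[k] B →ₗ[k] A)
    (hchiD1 : ∀ l b1 b2, chi l (SB.D b1) b2 = -(l • chi l b1 b2))
    (hchiD2 : ∀ l b1 b2, chi l b1 (SB.D b2) = Mb.DM (chi l b1 b2) + l • chi l b1 b2)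
    (hcoc : ∀ (l m : k) (b1 b2 b3 : B),
      Mb.lact l b1 (chi m b2 b3) - chi (l + m) (SB.mul l b1 b2) b3
        + chi l b1 (SB.mul m b2 b3) - Mb.ract (l + m) (chi l b1 b2) b3 = 0)
    (S : AssocConformalAlg k (A × B))
    (hSD : ∀ p : A × B, S.D p = (Mb.DM p.1, SB.D p.2))
    (hSm : ∀ (l : k) (p q : A × B),
      S.mul l p q
        = (Mb.ract l p.1 q.2 + Mb.lact l p.2 q.1 + chi l p.2 q.2, SB.mul l p.2 q.2)) :
    (∀ f : B →ₗ[k] A, (∀ b : B, ((f b, (0 : B)) : A × B) = 0) → f = 0) ∧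
    (∀ dE : (A × B) →ₗ[k] (A × B), IsConfDer S dE →
      (∀ a : A, (dE (a, (0 : B))).2 = 0) →
      (((∀ a : A, dE (a, (0 : B)) = 0) ∧ ∀ b : B, (dE ((0 : A), b)).2 = 0) ↔
        ∃ f : B →ₗ[k] A, (∀ b, f (SB.D b) = Mb.DM (f b)) ∧
          (∀ (l : k) (b1 b2 : B),
            f (SB.mul l b1 b2) = Mb.lact l b1 (f b2) + Mb.ract l (f b1) b2) ∧
          ∀ p : A × B, dE p = (f p.2, 0))) ∧
    (∀ (dA : A →ₗ[k] A) (dB : B →ₗ[k] B),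
      (∀ a, dA (Mb.DM a) = Mb.DM (dA a)) →
      ((∀ b, dB (SB.D b) = SB.D (dB b)) ∧
       ∀ (l : k) (b1 b2 : B),
         dB (SB.mul l b1 b2) = SB.mul l (dB b1) b2 + SB.mul l b1 (dB b2)) →
      ((∃ dE : (A × B) →ₗ[k] (A × B), IsConfDer S dE ∧
          (∀ a : A, dE (a, (0 : B))= ((dA a : A), (0 : B))) ∧
          ∀ b : B, (dE ((0 : A), b)).2 = dB b) ↔
        ((∀ (l : k) (b : B) (a : A),
            dA (Mb.lact l b a) = Mb.lact l b (dA a) + Mb.lact l (dB b) a) ∧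
         (∀ (l : k) (a : A) (b : B),
            dA (Mb.ract l a b) = Mb.ract l a (dB b) + Mb.ract l (dA a) b) ∧
         ∃ f : B →ₗ[k] A, (∀ b, f (SB.D b) = Mb.DM (f b)) ∧
           ∀ (l : k) (b1 b2 : B),
             dA (chi l b1 b2) - chi l (dB b1) b2 - chi l b1 (dB b2)
               = Mb.lact l b1 (f b2) - f (SB.mul l b1 b2) + Mb.ract l (f b1) b2))) := by

  refine ⟨?_, ?_, ?_⟩
  · -- injectivity of Z¹ → Der_A(E)
    intro f hf
    ext b
    simpa using congrArg Prod.fst (hf b)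
  · -- characterization of the kernel of κ̄
    intro dE hdE hA2
    constructor
    · rintro ⟨hA, hB⟩
      set f : B →ₗ[k] A := (LinearMap.fst k A B).comp (dE.comp (LinearMap.inr k A B)) with hfdef
      have key : ∀ b : B, dE (0, b) = (f b, 0) := fun b => Prod.ext rfl (hB b)
      have hall : ∀ p : A × B, dE p = (f p.2, 0) := by
        intro p
        have hp : p = ((p.1, 0) : A × B) + (0, p.2) := by simp
        rw [hp, map_add, hA p.1, key p.2]
        simp
      refine ⟨f, ?_, ?_, hall⟩
      · intro b
        have h := hdE.1 ((0 : A), b)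
        rw [hSD ((0 : A), b), key b, hSD] at h
        simp only [map_zero] at h
        rw [hall] at h
        simpa using congrArg Prod.fst h
      · intro l b1 b2
        have h := hdE.2 l ((0 : A), b1) ((0 : A), b2)
        rw [key b1, key b2] at h
        simp only [hSm, map_zero, LinearMap.zero_apply, zero_add, add_zero] at h
        rw [hall] at h
        have h1 := congrArg Prod.fst h
        simp only [Prod.fst_add] at h1
        rw [h1]
        abel
    · rintro ⟨f, hf1, hf2, hf3⟩
      constructor
      · intro a; rw [hf3]; simp
      · intro b; rw [hf3]
  · -- extensibility criterion
    intro dA dB hdAD hdB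
    constructor
    · rintro ⟨dE, hdE, hax, hbx⟩
      set f : B →ₗ[k] A := (LinearMap.fst k A B).comp (dE.comp (LinearMap.inr k A B)) with hfdef
      have key : ∀ b : B, dE (0, b) = (f b, dB b) := fun b => Prod.ext rfl (hbx b)
      refine ⟨?_, ?_, f, ?_, ?_⟩
      · intro l b a
        have h := hdE.2 l ((0 : A), b) (a, (0 : B))
        rw [key b, hax a] at h
        simp only [hSm, map_zero, LinearMap.zero_apply, zero_add, add_zero] at h
        rw [hax] at h
        have h1 := congrArg Prod.fst h
        simp only [Prod.fst_add] at h1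
        rw [h1]; abel
      · intro l a b
        have h := hdE.2 l (a, (0 : B)) ((0 : A), b)
        rw [key b, hax a] at h
        simp only [hSm, map_zero, LinearMap.zero_apply, zero_add, add_zero] at h
        rw [hax] at h
        have h1 := congrArg Prod.fst h
        simp only [Prod.fst_add] at h1
        rw [h1]; abel
      · intro b
        have h := hdE.1 ((0 : A), b)
        rw [hSD ((0 : A), b), key b, hSD] at h
        simp only [map_zero] at h
        rw [key] at h
        simpa using congrArg Prod.fst h
      · intro l b1 b2
        have h := hdE.2 l ((0 : A), b1) ((0 : A), b2)
        rw [key b1, key b2] at h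
        simp only [hSm, map_zero, LinearMap.zero_apply, zero_add, add_zero] at h
        -- left side: dE (chi l b1 b2, SB.mul l b1 b2)
        have hsplit : dE (chi l b1 b2, SB.mul l b1 b2)
            = (dA (chi l b1 b2) + f (SB.mul l b1 b2), dB (SB.mul l b1 b2)) := by
          have hp : ((chi l b1 b2, SB.mul l b1 b2) : A × B)
              = ((chi l b1 b2, 0) : A × B) + (0, SB.mul l b1 b2) := by simp
          rw [hp, map_add, hax, key]
          simp [Prod.ext_iff]
        rw [hsplit] at h
        have h1 := congrArg Prod.fst h
        simp only [Prod.fst_add] at h1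
        have h2 : dA (chi l b1 b2)
            = Mb.ract l (f b1) b2 + chi l (dB b1) b2
              + (Mb.lact l b1 (f b2) + chi l b1 (dB b2)) - f (SB.mul l b1 b2) := by
          rw [← h1]; abel
        rw [h2]; abel
    · rintro ⟨hlact, hract, f, hf1, hcocf⟩
      refine ⟨LinearMap.prod ((dA.comp (LinearMap.fst k A B))
          + f.comp (LinearMap.snd k A B)) (dB.comp (LinearMap.snd k A B)), ⟨?_, ?_⟩, ?_, ?_⟩
      · intro p
        rw [hSD p, hSD]
        simp [hdAD, hf1, hdB.1, map_add]
      · intro l p q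
        obtain ⟨a1, b1⟩ := p
        obtain ⟨a2, b2⟩ := q
        rw [hSm l (a1, b1) (a2, b2)]
        simp only [LinearMap.prod_apply, LinearMap.add_apply, LinearMap.coe_comp,
          Function.comp_apply, LinearMap.fst_apply, LinearMap.snd_apply, Function.prod]
        rw [hSm, hSm]
        refine Prod.ext ?_ ?_
        · simp only [map_add, Prod.fst_add, LinearMap.add_apply]
          have hc := hcocf l b1 b2
          rw [sub_sub, sub_eq_iff_eq_add] at hc
          rw [hlact l b1 a2, hract l a1 b2, hc]
          abel
        · exact hdB.2 l b1 b2
      · intro a; simp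
      · intro b; simp
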